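/- Let m ≥ 1. The space of complex symmetric m×m matrices A satisfying ∏_{k=1}^{m} det(A^{(k)}) = 1 (with the subspace topology from the space of m×m complex matrices) is homotopy equivalent to the (m-1)-torus (S¹)^{m-1}. (This space is the global Milnor fiber of the determinantal arrangement defined by ∏_{k=1}^{m} det(A^{(k)}) = 0 on the space of symmetric matrices.) -/

import Mathlib

open Matrix

noncomputable section

/-- The `k`-th leading principal minor. -/
def mino {n : ℕ} (A : Matrix (Fin n) (Fin n) ℂ) (k : Fin n) : ℂ :=
  (A.submatrix (Fin.castLE (show (k : ℕ) + 1 ≤ n from k.isLt))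
    (Fin.castLE (show (k : ℕ) + 1 ≤ n from k.isLt))).det

/-- Symmetric block matrix `[[α, α cᵀ], [α c, B + α c cᵀ]]`. -/
def bmat {n : ℕ} (α : ℂ) (c : Fin n → ℂ) (B : Matrix (Fin n) (Fin n) ℂ) :
    Matrix (Fin (n + 1)) (Fin (n + 1)) ℂ :=
  Matrix.of fun i j =>
    Fin.cases (Fin.cases α (fun j' => α * c j') j)
      (fun i' => Fin.cases (α * c i') (fun j' => B i' j' + α * c i' * c j') j) i

@[simp] lemma bmat_zero_zero {n : ℕ} (α : ℂ) (c : Fin n → ℂ) (B : Matrix (Fin n) (Fin n) ℂ) :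
    bmat α c B 0 0 = α := rfl

@[simp] lemma bmat_zero_succ {n : ℕ} (α : ℂ) (c : Fin n → ℂ) (B : Matrix (Fin n) (Fin n) ℂ)
    (j : Fin n) : bmat α c B 0 j.succ = α * c j := by
  simp [bmat]

@[simp] lemma bmat_succ_zero {n : ℕ} (α : ℂ) (c : Fin n → ℂ) (B : Matrix (Fin n) (Fin n) ℂ)
    (i : Fin n) : bmat α c B i.succ 0 = α * c i := by
  simp [bmat]

@[simp] lemma bmat_succ_succ {n : ℕ} (α : ℂ) (c : Fin n → ℂ) (B : Matrix (Fin n) (Fin n) ℂ)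
    (i j : Fin n) : bmat α c B i.succ j.succ = B i j + α * c i * c j := by
  simp [bmat]

def lmat {n : ℕ} (c : Fin n → ℂ) : Matrix (Fin (n + 1)) (Fin (n + 1)) ℂ :=
  Matrix.of fun i j =>
    Fin.cases (Fin.cases 1 (fun _ => 0) j)
      (fun i' => Fin.cases (c i') (fun j' => if i' = j' then 1 else 0) j) i

def dmat {n : ℕ} (α : ℂ) (B : Matrix (Fin n) (Fin n) ℂ) :
    Matrix (Fin (n + 1)) (Fin (n + 1)) ℂ :=
  Matrix.of fun i j =>
    Fin.cases (Fin.cases α (fun _ => 0) j)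
      (fun i' => Fin.cases 0 (fun j' => B i' j') j) i

lemma bmat_eq_mul {n : ℕ} (α : ℂ) (c : Fin n → ℂ) (B : Matrix (Fin n) (Fin n) ℂ) :
    bmat α c B = lmat c * dmat α B * (lmat c)ᵀ := by
  ext i j
  rw [Matrix.mul_apply]
  induction i using Fin.cases with
  | zero =>
      induction j using Fin.cases with
      | zero =>
          simp [Fin.sum_univ_succ, Matrix.mul_apply, lmat, dmat]
      | succ j' =>
          simp [Fin.sum_univ_succ, Matrix.mul_apply, lmat, dmat, mul_comm]
  | succ i' =>
      induction j using Fin.cases with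
      | zero =>
          simp [Fin.sum_univ_succ, Matrix.mul_apply, lmat, dmat]
          ring
      | succ j' =>
          simp [Fin.sum_univ_succ, Matrix.mul_apply, lmat, dmat, Finset.mul_sum,
            Finset.sum_ite_eq, Finset.sum_ite_eq', mul_comm, mul_left_comm]
          ring

lemma det_lmat {n : ℕ} (c : Fin n → ℂ) : (lmat c).det = 1 := by
  rw [Matrix.det_succ_row_zero]
  rw [Fin.sum_univ_succ]
  have h1 : ∀ j : Fin n, (lmat c) 0 j.succ = 0 := fun j => rfl
  simp only [h1, mul_zero, zero_mul, Finset.sum_const_zero, add_zero]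
  have h2 : (lmat c).submatrix Fin.succ ((0 : Fin (n+1)).succAbove) = 1 := by
    ext i j
    simp [Fin.succAbove_zero, lmat, Matrix.one_apply]
  rw [h2]
  simp [lmat]

lemma det_dmat {n : ℕ} (α : ℂ) (B : Matrix (Fin n) (Fin n) ℂ) :
    (dmat α B).det = α * B.det := by
  rw [Matrix.det_succ_row_zero, Fin.sum_univ_succ]
  have h1 : ∀ j : Fin n, (dmat α B) 0 j.succ = 0 := fun j => rfl
  simp only [h1, mul_zero, zero_mul, Finset.sum_const_zero, add_zero]
  have h2 : (dmat α B).submatrix Fin.succ ((0 : Fin (n+1)).succAbove) = B := by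
    ext i j
    simp [Fin.succAbove_zero, dmat]
  rw [h2]
  simp [dmat]

lemma det_bmat {n : ℕ} (α : ℂ) (c : Fin n → ℂ) (B : Matrix (Fin n) (Fin n) ℂ) :
    (bmat α c B).det = α * B.det := by
  rw [bmat_eq_mul, Matrix.det_mul, Matrix.det_mul, det_lmat, Matrix.det_transpose, det_lmat,
    det_dmat]
  ring

lemma mino_zero {n : ℕ} (A : Matrix (Fin (n + 1)) (Fin (n + 1)) ℂ) :
    mino A 0 = A 0 0 := by
  rw [mino]
  exact Matrix.det_fin_one _

lemma mino_succ {n : ℕ} (α : ℂ) (c : Fin n → ℂ) (B : Matrix (Fin n) (Fin n) ℂ) (k : Fin n) :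
    mino (bmat α c B) k.succ = α * mino B k := by
  have key : (bmat α c B).submatrix
        (Fin.castLE (show (k.succ : ℕ) + 1 ≤ n + 1 from k.succ.isLt))
        (Fin.castLE (show (k.succ : ℕ) + 1 ≤ n + 1 from k.succ.isLt)) =
      bmat α (fun i => c (Fin.castLE (show (k : ℕ) + 1 ≤ n from k.isLt) i))
        (B.submatrix (Fin.castLE (show (k : ℕ) + 1 ≤ n from k.isLt))
          (Fin.castLE (show (k : ℕ) + 1 ≤ n from k.isLt))) := by
    ext i j
    induction i using Fin.cases with
    | zero =>
        induction j using Fin.cases with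
        | zero => simp
        | succ j' => simp [Fin.castLE_succ]
    | succ i' =>
        induction j using Fin.cases with
        | zero => simp [Fin.castLE_succ]
        | succ j' => simp [Fin.castLE_succ]
  rw [mino, key, det_bmat]
  rfl

lemma prod_mino_bmat {n : ℕ} (α : ℂ) (c : Fin n → ℂ) (B : Matrix (Fin n) (Fin n) ℂ) :
    ∏ k : Fin (n + 1), mino (bmat α c B) k = α ^ (n + 1) * ∏ k : Fin n, mino B k := by
  rw [Fin.prod_univ_succ]
  simp only [mino_succ, mino_zero, bmat_zero_zero]
  rw [Finset.prod_mul_distrib, Finset.prod_const]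
  simp [pow_succ]
  ring

/-- The auxiliary spaces of the induction. -/
def U (r n : ℕ) (N : Fin r → ℕ) : Type :=
  {p : (Fin r → ℂ) × Matrix (Fin n) (Fin n) ℂ //
    p.2ᵀ = p.2 ∧ (∏ i, p.1 i ^ N i) * ∏ k, mino p.2 k = 1}

instance (r n : ℕ) (N : Fin r → ℕ) : TopologicalSpace (U r n N) :=
  instTopologicalSpaceSubtype

lemma prod_snoc_pow {r : ℕ} (a : Fin r → ℂ) (N : Fin r → ℕ) (α : ℂ) (e : ℕ) :
    ∏ i : Fin (r + 1), (Fin.snoc a α : Fin (r+1) → ℂ) i ^ (Fin.snoc N e : Fin (r+1) → ℕ) i =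
      (∏ i, a i ^ N i) * α ^ e := by
  rw [Fin.prod_univ_castSucc]
  simp

lemma prod_pow_snoc {r : ℕ} (a : Fin (r + 1) → ℂ) (N : Fin r → ℕ) (e : ℕ) :
    ∏ i, a i ^ (Fin.snoc N e : Fin (r + 1) → ℕ) i =
      (∏ i : Fin r, a i.castSucc ^ N i) * a (Fin.last r) ^ e := by
  rw [Fin.prod_univ_castSucc]
  simp

lemma U_factors_ne {r n : ℕ} {N : Fin r → ℕ} (p : U r n N) :
    (∀ i, N i ≠ 0 → p.1.1 i ≠ 0) ∧ ∀ k, mino p.1.2 k ≠ 0 := by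
  have h := p.2.2
  have h1 : (∏ i, p.1.1 i ^ N i) ≠ 0 := left_ne_zero_of_mul_eq_one h
  have h2 : (∏ k, mino p.1.2 k) ≠ 0 := right_ne_zero_of_mul_eq_one h
  rw [Finset.prod_ne_zero_iff] at h1 h2
  refine ⟨fun i hNi => ?_, fun k => h2 k (Finset.mem_univ k)⟩
  have := h1 i (Finset.mem_univ i)
  exact fun h0 => this (by simp [h0, pow_eq_zero_iff, hNi])

/-- Reconstruction of a symmetric matrix from its blocks. -/
lemma bmat_decomp {n : ℕ} (A : Matrix (Fin (n + 1)) (Fin (n + 1)) ℂ) (hA : Aᵀ = A)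
    (h0 : A 0 0 ≠ 0) :
    bmat (A 0 0) (fun i => A i.succ 0 / A 0 0)
      (Matrix.of fun i j => A i.succ j.succ - A i.succ 0 * A j.succ 0 / A 0 0) = A := by
  have hs : ∀ i j, A j i = A i j := fun i j => by
    have h' := congrFun (congrFun hA j) i
    rw [Matrix.transpose_apply] at h'
    exact h'.symm
  ext i j
  induction i using Fin.cases with
  | zero =>
      induction j using Fin.cases with
      | zero => simp
      | succ j' =>
          rw [bmat_zero_succ, mul_div_cancel₀ _ h0]
          exact hs 0 j'.succ
  | succ i' =>
      induction j using Fin.cases with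
      | zero => rw [bmat_succ_zero, mul_div_cancel₀ _ h0]
      | succ j' =>
          rw [bmat_succ_succ]
          simp only [Matrix.of_apply]
          field_simp
          ring

/-- The elimination step homeomorphism. -/
noncomputable def step (r n : ℕ) (N : Fin r → ℕ) :
    U r (n + 1) N ≃ₜ (Fin n → ℂ) × U (r + 1) n (Fin.snoc N (n + 1)) where
  toFun p := by
    refine ⟨fun i => p.1.2 i.succ 0 / p.1.2 0 0,
      (Fin.snoc p.1.1 (p.1.2 0 0),
        Matrix.of fun i j => p.1.2 i.succ j.succ - p.1.2 i.succ 0 * p.1.2 j.succ 0 / p.1.2 0 0),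
      ?_, ?_⟩
    · -- symmetry of the Schur complement
      have hs : ∀ i j, p.1.2 j i = p.1.2 i j := fun i j => by
        have h' := congrFun (congrFun p.2.1 j) i
        rw [Matrix.transpose_apply] at h'
        exact h'.symm
      ext i j
      simp only [Matrix.transpose_apply, Matrix.of_apply]
      rw [hs j.succ i.succ]
      ring
    · -- the product condition
      have h0 : p.1.2 0 0 ≠ 0 := by
        have := (U_factors_ne p).2 0
        rwa [mino_zero] at this
      have hd := bmat_decomp p.1.2 p.2.1 h0
      have hm : ∏ k : Fin (n + 1), mino p.1.2 k =
          p.1.2 0 0 ^ (n + 1) * ∏ k : Fin n,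
            mino (Matrix.of fun i j =>
              p.1.2 i.succ j.succ - p.1.2 i.succ 0 * p.1.2 j.succ 0 / p.1.2 0 0) k := by
        conv_lhs => rw [← hd]
        rw [prod_mino_bmat]
      rw [prod_snoc_pow, mul_assoc, ← hm]
      exact p.2.2
  invFun q := by
    refine ⟨(Fin.init q.2.1.1, bmat (q.2.1.1 (Fin.last r)) q.1 q.2.1.2), ?_, ?_⟩
    · -- symmetry of bmat
      have hs : ∀ i j, q.2.1.2 j i = q.2.1.2 i j := fun i j => by
        have h' := congrFun (congrFun q.2.2.1 j) i
        rw [Matrix.transpose_apply] at h'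
        exact h'.symm
      ext i j
      simp only [Matrix.transpose_apply]
      induction i using Fin.cases with
      | zero => induction j using Fin.cases with
        | zero => rfl
        | succ j' => simp
      | succ i' => induction j using Fin.cases with
        | zero => simp
        | succ j' => simp only [bmat_succ_succ]; rw [hs j' i']; ring
    · rw [prod_mino_bmat]
      have hthis := q.2.2.2
      rw [prod_pow_snoc] at hthis
      rw [← mul_assoc]
      exact hthis
  left_inv p := by
    have h0 : p.1.2 0 0 ≠ 0 := by
      have := (U_factors_ne p).2 0
      rwa [mino_zero] at this
    apply Subtype.ext
    refine Prod.ext ?_ ?_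
    · simp
    · simp only [Fin.snoc_last]
      exact bmat_decomp p.1.2 p.2.1 h0
  right_inv q := by
    have hα : q.2.1.1 (Fin.last r) ≠ 0 := by
      have := (U_factors_ne q.2).1 (Fin.last r)
      simp only [Fin.snoc_last] at this
      exact this (by omega)
    refine Prod.ext ?_ (Subtype.ext (Prod.ext ?_ ?_))
    · funext i
      simp only
      rw [bmat_succ_zero, bmat_zero_zero, mul_div_cancel_left₀ _ hα]
    · funext i
      simp only
      rw [bmat_zero_zero]
      exact congrFun (Fin.snoc_init_self q.2.1.1) i
    · ext i j
      simp only [Matrix.of_apply, bmat_succ_succ, bmat_succ_zero, bmat_zero_zero]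
      field_simp
      ring
  continuous_toFun := by
    have hent : ∀ (i j : Fin (n + 1)),
        Continuous fun p : U r (n + 1) N => p.1.2 i j :=
      fun i j => ((continuous_snd.comp continuous_subtype_val).matrix_elem i j)
    have h0 : ∀ p : U r (n + 1) N, p.1.2 0 0 ≠ 0 := fun p => by
      have := (U_factors_ne p).2 0
      rwa [mino_zero] at this
    have ha : ∀ i : Fin r, Continuous fun p : U r (n + 1) N => p.1.1 i :=
      fun i => (continuous_apply i).comp (continuous_fst.comp continuous_subtype_val)
    refine Continuous.prodMk ?_ (Continuous.subtype_mk (Continuous.prodMk ?_ ?_) _)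
    · exact continuous_pi fun i => (hent i.succ 0).div (hent 0 0) h0
    · refine continuous_pi fun i => ?_
      induction i using Fin.lastCases with
      | last => simpa using hent 0 0
      | cast i => simpa using ha i
    · exact continuous_matrix fun i j =>
        (hent i.succ j.succ).sub (((hent i.succ 0).mul (hent j.succ 0)).div (hent 0 0) h0)
  continuous_invFun := by
    have hc : ∀ i : Fin n,
        Continuous fun q : (Fin n → ℂ) × U (r + 1) n (Fin.snoc N (n + 1)) => q.1 i :=
      fun i => (continuous_apply i).comp continuous_fst
    have ha : ∀ i : Fin (r + 1),
        Continuous fun q : (Fin n → ℂ) × U (r + 1) n (Fin.snoc N (n + 1)) => q.2.1.1 i :=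
      fun i => (continuous_apply i).comp
        (continuous_fst.comp (continuous_subtype_val.comp continuous_snd))
    have hB : ∀ i j : Fin n,
        Continuous fun q : (Fin n → ℂ) × U (r + 1) n (Fin.snoc N (n + 1)) => q.2.1.2 i j :=
      fun i j => ((continuous_snd.comp (continuous_subtype_val.comp continuous_snd)).matrix_elem i j)
    refine Continuous.subtype_mk (Continuous.prodMk ?_ ?_) _
    · exact continuous_pi fun i => ha i.castSucc
    · refine continuous_matrix fun i j => ?_
      induction i using Fin.cases with
      | zero => induction j using Fin.cases with
        | zero => simpa using ha (Fin.last r)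
        | succ j' => simp only [bmat_zero_succ]; exact (ha (Fin.last r)).mul (hc j')
      | succ i' => induction j using Fin.cases with
        | zero => simp only [bmat_succ_zero]; exact (ha (Fin.last r)).mul (hc i')
        | succ j' =>
            simp only [bmat_succ_succ]
            exact (hB i' j').add (((ha (Fin.last r)).mul (hc i')).mul (hc j'))

/-- Base case: for `1 × 1` matrices the matrix entry is determined by the `a`-coordinates. -/
noncomputable def base (r : ℕ) (N : Fin r → ℕ) (hN : ∀ i, 0 < N i) :
    U r 1 N ≃ₜ {a : Fin r → ℂ // ∀ i, a i ≠ 0} where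
  toFun p := ⟨p.1.1, fun i => (U_factors_ne p).1 i (hN i).ne'⟩
  invFun a := by
    refine ⟨(a.1, Matrix.of fun _ _ => (∏ i, a.1 i ^ N i)⁻¹), ?_, ?_⟩
    · ext i j
      rfl
    · have hP : (∏ i, a.1 i ^ N i) ≠ 0 :=
        Finset.prod_ne_zero_iff.mpr fun i _ => pow_ne_zero _ (a.2 i)
      have : ∏ k : Fin 1, mino (Matrix.of fun _ _ => (∏ i, a.1 i ^ N i)⁻¹ :
          Matrix (Fin 1) (Fin 1) ℂ) k = (∏ i, a.1 i ^ N i)⁻¹ := by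
        rw [Fin.prod_univ_one]
        exact mino_zero (n := 0) _
      rw [this, mul_inv_cancel₀ hP]
  left_inv p := by
    have hP : (∏ i, p.1.1 i ^ N i) ≠ 0 :=
      Finset.prod_ne_zero_iff.mpr fun i _ => pow_ne_zero _ ((U_factors_ne p).1 i (hN i).ne')
    apply Subtype.ext
    refine Prod.ext rfl ?_
    ext i j
    have hi : i = 0 := Subsingleton.elim i 0
    have hj : j = 0 := Subsingleton.elim j 0
    subst hi hj
    have hc := p.2.2
    have h1 : ∏ k : Fin 1, mino p.1.2 k = p.1.2 0 0 := by
      rw [Fin.prod_univ_one]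
      exact mino_zero (n := 0) _
    rw [h1] at hc
    simpa using inv_eq_of_mul_eq_one_right hc
  right_inv a := by
    apply Subtype.ext
    rfl
  continuous_toFun :=
    Continuous.subtype_mk (continuous_fst.comp continuous_subtype_val) _
  continuous_invFun := by
    refine Continuous.subtype_mk (Continuous.prodMk continuous_subtype_val ?_) _
    refine continuous_matrix fun i j => Continuous.inv₀ ?_ ?_
    · exact continuous_finset_prod _ fun i _ =>
        ((continuous_apply i).comp continuous_subtype_val).pow (N i)
    · exact fun a => Finset.prod_ne_zero_iff.mpr fun i _ => pow_ne_zero _ (a.2 i)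

/-- Functions with nonvanishing coordinates as a pi type. -/
def subPi (k : ℕ) : {a : Fin k → ℂ // ∀ i, a i ≠ 0} ≃ₜ (Fin k → {z : ℂ // z ≠ 0}) where
  toFun a i := ⟨a.1 i, a.2 i⟩
  invFun f := ⟨fun i => (f i).1, fun i => (f i).2⟩
  left_inv a := rfl
  right_inv f := rfl
  continuous_toFun := continuous_pi fun i =>
    Continuous.subtype_mk ((continuous_apply i).comp continuous_subtype_val) _
  continuous_invFun :=
    Continuous.subtype_mk (continuous_pi fun i => continuous_subtype_val.comp (continuous_apply i)) _

lemma coef_pos {t r : ℝ} (ht0 : 0 ≤ t) (ht1 : t ≤ 1) (hr : 0 < r) :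
    0 < (1 - t) * r⁻¹ + t := by
  rcases eq_or_lt_of_le ht0 with h | h
  · rw [← h]
    simpa using inv_pos.mpr hr
  · exact add_pos_of_nonneg_of_pos (mul_nonneg (by linarith) (inv_pos.mpr hr).le) h

noncomputable def toSph : C({z : ℂ // z ≠ 0}, Metric.sphere (0 : ℂ) 1) where
  toFun z := ⟨(‖z.1‖ : ℂ)⁻¹ * z.1, by
    rw [mem_sphere_zero_iff_norm, norm_mul, norm_inv, Complex.norm_real, norm_norm,
      inv_mul_cancel₀ (norm_ne_zero_iff.mpr z.2)]⟩
  continuous_toFun := by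
    refine Continuous.subtype_mk (Continuous.mul (Continuous.inv₀ ?_ ?_) continuous_subtype_val) _
    · exact Complex.continuous_ofReal.comp (continuous_norm.comp continuous_subtype_val)
    · exact fun z => by
        simpa [Complex.ofReal_ne_zero] using norm_ne_zero_iff.mpr z.2

lemma sphere_ne_zero (w : Metric.sphere (0 : ℂ) 1) : (w : ℂ) ≠ 0 := by
  have hw := mem_sphere_zero_iff_norm.mp w.2
  intro h
  rw [h] at hw
  simp at hw

def fromSph : C(Metric.sphere (0 : ℂ) 1, {z : ℂ // z ≠ 0}) where
  toFun w := ⟨w.1, sphere_ne_zero w⟩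
  continuous_toFun := Continuous.subtype_mk continuous_subtype_val sphere_ne_zero

/-- The retraction homotopy on `ℂ ∖ {0}`. -/
noncomputable def retrH : C(↑unitInterval × {z : ℂ // z ≠ 0}, {z : ℂ // z ≠ 0}) where
  toFun tz := ⟨((((1 : ℝ) - tz.1) * ‖tz.2.1‖⁻¹ + tz.1 : ℝ) : ℂ) * tz.2.1,
    mul_ne_zero (Complex.ofReal_ne_zero.mpr
      (coef_pos tz.1.2.1 tz.1.2.2 (norm_pos_iff.mpr tz.2.2)).ne') tz.2.2⟩
  continuous_toFun := by
    refine Continuous.subtype_mk (Continuous.mul (Complex.continuous_ofReal.comp ?_)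
      (continuous_subtype_val.comp continuous_snd)) _
    have ht : Continuous fun tz : ↑unitInterval × {z : ℂ // z ≠ 0} => (tz.1 : ℝ) :=
      continuous_subtype_val.comp continuous_fst
    have hn : Continuous fun tz : ↑unitInterval × {z : ℂ // z ≠ 0} => ‖tz.2.1‖⁻¹ :=
      Continuous.inv₀ (continuous_norm.comp (continuous_subtype_val.comp continuous_snd))
        fun tz => norm_ne_zero_iff.mpr tz.2.2
    exact ((continuous_const.sub ht).mul hn).add ht

/-- `ℂ ∖ {0}` is homotopy equivalent to the unit circle. -/
noncomputable def nzHequivSphere : ContinuousMap.HomotopyEquiv {z : ℂ // z ≠ 0}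
    (Metric.sphere (0 : ℂ) 1) where
  toFun := toSph
  invFun := fromSph
  left_inv := by
    refine ⟨⟨retrH, fun z => ?_, fun z => ?_⟩⟩
    · apply Subtype.ext
      simp only [retrH, fromSph, toSph, ContinuousMap.comp_apply, ContinuousMap.coe_mk]
      norm_num
    · apply Subtype.ext
      simp only [retrH, fromSph, toSph, ContinuousMap.comp_apply, ContinuousMap.coe_mk,
        ContinuousMap.id_apply]
      norm_num
  right_inv := by
    have h : toSph.comp fromSph = ContinuousMap.id _ := by
      ext w
      simp only [fromSph, toSph, ContinuousMap.comp_apply, ContinuousMap.coe_mk,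
        ContinuousMap.id_apply]
      rw [mem_sphere_zero_iff_norm.mp w.2]
      norm_num
    rw [h]

/-- Dropping a contractible factor. -/
noncomputable def dropContractible (X Y : Type) [TopologicalSpace X] [TopologicalSpace Y]
    [ContractibleSpace X] : ContinuousMap.HomotopyEquiv (X × Y) Y :=
  (((ContractibleSpace.hequiv_unit X).some.prodCongr
    (ContinuousMap.HomotopyEquiv.refl Y)).trans (Homeomorph.punitProd Y).toHomotopyEquiv)

theorem mainU (n : ℕ) (hn : 1 ≤ n) : ∀ (r d : ℕ) (N : Fin r → ℕ), (∀ i, 0 < N i) →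
    r + n = d + 1 →
    Nonempty (ContinuousMap.HomotopyEquiv (U r n N) (Fin d → Metric.sphere (0 : ℂ) 1)) := by
  induction n, hn using Nat.le_induction with
  | base =>
      intro r d N hN hd
      have hr : r = d := by omega
      subst hr
      exact ⟨((base r N hN).trans (subPi r)).toHomotopyEquiv.trans
        (ContinuousMap.HomotopyEquiv.piCongrRight fun _ => nzHequivSphere)⟩
  | succ n hn ih =>
      intro r d N hN hd
      have hN' : ∀ i : Fin (r + 1), 0 < (Fin.snoc N (n + 1) : Fin (r + 1) → ℕ) i := by
        intro i
        induction i using Fin.lastCases with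
        | last => simp
        | cast i => simpa using hN i
      obtain ⟨e⟩ := ih (r + 1) d (Fin.snoc N (n + 1)) hN' (by omega)
      exact ⟨(step r n N).toHomotopyEquiv.trans
        ((dropContractible (Fin n → ℂ) _).trans e)⟩

/-- The Milnor fiber as a `U`-space. -/
def milnorHomeo (m : ℕ) :
    {A : Matrix (Fin m) (Fin m) ℂ // Aᵀ = A ∧
      ∏ k : Fin m,
        (A.submatrix (Fin.castLE (show (k : ℕ) + 1 ≤ m from k.isLt))
          (Fin.castLE (show (k : ℕ) + 1 ≤ m from k.isLt))).det = 1} ≃ₜ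
    U 0 m Fin.elim0 where
  toFun A := ⟨(Fin.elim0, A.1), A.2.1, by
    have h := A.2.2
    simpa [mino] using h⟩
  invFun p := ⟨p.1.2, p.2.1, by
    have h := p.2.2
    simpa [mino] using h⟩
  left_inv A := rfl
  right_inv p := Subtype.ext (Prod.ext (Subsingleton.elim _ _) rfl)
  continuous_toFun :=
    Continuous.subtype_mk (Continuous.prodMk continuous_const continuous_subtype_val) _
  continuous_invFun :=
    Continuous.subtype_mk (continuous_snd.comp continuous_subtype_val) _

end

theorem symmetric_milnor_fiber_homotopy_torus (m : ℕ) (hm : 1 ≤ m) :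
    Nonempty (ContinuousMap.HomotopyEquiv
      {A : Matrix (Fin m) (Fin m) ℂ // Aᵀ = A ∧
        ∏ k : Fin m,
          (A.submatrix (Fin.castLE (show (k : ℕ) + 1 ≤ m from k.isLt))
            (Fin.castLE (show (k : ℕ) + 1 ≤ m from k.isLt))).det = 1}
      (Fin (m - 1) → Metric.sphere (0 : ℂ) 1)) := by
  obtain ⟨e⟩ := mainU m hm 0 (m - 1) Fin.elim0 (fun i => i.elim0) (by omega)
  exact ⟨(milnorHomeo m).toHomotopyEquiv.trans e⟩
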